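/- arXiv:1607.01080 — 4 statements merged into one kernel-verified Lean document; each statement's English description precedes it below -/
import Mathlib

section
/- Let n be a natural number, a a real number, h > 0, and g : ℝ → ℝ a function that is (n+1)-times differentiable on the open interval (a, a+h), such that for every k ∈ {0,…,n+1} the right limit d_k := lim_{ξ→0⁺} g^{(k)}(a+ξ) exists, and such that g^{(n+1)} is continuous on (a, a+h) with m ≤ g^{(n+1)}(t)/(n+1)! ≤ M for all t ∈ (a, a+h). Then for every ε with 0 < ε < h and every k with 0 ≤ k ≤ n, the k-th Taylor coefficient of g at a+ε satisfies: g^{(k)}(a+ε)/k! ∈ Σ_{l=k}^{n} (binomial coefficient C(l,k)) · ε^{l-k} · d_l/l! + C(n+1,k) · ε^{n+1-k} · [m, M], i.e. there exists r ∈ [m, M] with g^{(k)}(a+ε)/k! = Σ_{l=k}^{n} C(l,k) ε^{l-k} d_l/l! + C(n+1,k) ε^{n+1-k} r. -/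
open Set Filter Topology

private lemma iteratedDeriv_comp_iteratedDeriv (k : ℕ) (g : ℝ → ℝ) :
    ∀ i : ℕ, iteratedDeriv i (iteratedDeriv k g) = iteratedDeriv (k + i) g := by
  intro i
  induction i with
  | zero => simp
  | succ i ih =>
    rw [iteratedDeriv_succ, ih, ← iteratedDeriv_succ]
    rfl

private lemma iteratedDerivWithin_eq_iteratedDeriv_aux {s : Set ℝ}
    (hs : UniqueDiffOn ℝ s) {f : ℝ → ℝ} :
    ∀ i : ℕ, (∀ j < i, ∀ t ∈ s, DifferentiableAt ℝ (iteratedDeriv j f) t) →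
      ∀ x ∈ s, iteratedDerivWithin i f s x = iteratedDeriv i f x := by
  intro i
  induction i with
  | zero => simp
  | succ i ih =>
    intro hdiff x hx
    have heq : ∀ y ∈ s, iteratedDerivWithin i f s y = iteratedDeriv i f y :=
      ih (fun j hj => hdiff j (hj.trans (Nat.lt_succ_self i)))
    rw [iteratedDerivWithin_succ, derivWithin_congr heq (heq x hx),
      (hdiff i (Nat.lt_succ_self i) x hx).derivWithin (hs x hx), ← iteratedDeriv_succ]

/-- If `g : ℝ → ℝ` is `(n+1)`-times differentiable on `(a, a+h)`, the right limits
`d k` of the `k`-th derivatives at `a` exist for `k ≤ n+1`, and the `(n+1)`-st Taylor coefficient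
`g⁽ⁿ⁺¹⁾/(n+1)!` is continuous on `(a, a+h)` with values in `[m, M]`, then for every `0 < ε < h`
and every `k ≤ n` the `k`-th Taylor coefficient of `g` at `a + ε` satisfies
`g⁽ᵏ⁾(a+ε)/k! = Σ_{l=k}^{n} C(l,k) ε^{l-k} d_l/l! + C(n+1,k) ε^{n+1-k} r` for some `r ∈ [m, M]`. -/
theorem taylor_coeff_enclosure
    (n : ℕ) (a h m M : ℝ) (hh : 0 < h) (g : ℝ → ℝ) (d : ℕ → ℝ)
    (hdiff : ∀ k ≤ n, ∀ t ∈ Ioo a (a + h), DifferentiableAt ℝ (iteratedDeriv k g) t)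
    (hlim : ∀ k ≤ n + 1,
      Tendsto (fun ξ => iteratedDeriv k g (a + ξ)) (𝓝[>] (0 : ℝ)) (𝓝 (d k)))
    (hcont : ContinuousOn (iteratedDeriv (n + 1) g) (Ioo a (a + h)))
    (hbound : ∀ t ∈ Ioo a (a + h),
      m ≤ iteratedDeriv (n + 1) g t / (Nat.factorial (n + 1) : ℝ) ∧
        iteratedDeriv (n + 1) g t / (Nat.factorial (n + 1) : ℝ) ≤ M) :
    ∀ ε : ℝ, 0 < ε → ε < h → ∀ k ≤ n,
      ∃ r ∈ Icc m M,
        iteratedDeriv k g (a + ε) / (Nat.factorial k : ℝ) =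
          (∑ l ∈ Finset.Icc k n,
              (l.choose k : ℝ) * ε ^ (l - k) * (d l / (Nat.factorial l : ℝ))) +
            ((n + 1).choose k : ℝ) * ε ^ (n + 1 - k) * r := by
  intro ε hε0 hεh k hk
  have hcomp : ∀ i : ℕ, iteratedDeriv i (iteratedDeriv k g) = iteratedDeriv (k + i) g :=
    iteratedDeriv_comp_iteratedDeriv k g
  obtain ⟨p, hkp⟩ : ∃ p, k + p = n := ⟨n - k, by omega⟩
  have hexp : n + 1 - k = p + 1 := by omega
  set X : ℝ := iteratedDeriv k g (a + ε) / (Nat.factorial k : ℝ) with hX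
  set F : ℝ → ℝ := fun δ => ∑ l ∈ Finset.Icc k n,
      (l.choose k : ℝ) * (ε - δ) ^ (l - k) * (iteratedDeriv l g (a + δ) / (Nat.factorial l : ℝ))
    with hF
  set L : ℝ := ∑ l ∈ Finset.Icc k n,
      (l.choose k : ℝ) * ε ^ (l - k) * (d l / (Nat.factorial l : ℝ)) with hL
  set C : ℝ := ((n + 1).choose k : ℝ) with hC
  have hC0 : 0 < C := by
    rw [hC]; exact_mod_cast Nat.choose_pos (by omega)
  -- key: Taylor with Lagrange remainder from a+δ to a+ε
  have key : ∀ δ ∈ Ioo (0:ℝ) ε, ∃ c ∈ Ioo a (a + h),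
      X = F δ + C * (ε - δ) ^ (p + 1) *
        (iteratedDeriv (n + 1) g c / (Nat.factorial (n + 1) : ℝ)) := by
    intro δ hδ
    obtain ⟨hδ0, hδε⟩ := hδ
    have hx : a + δ < a + ε := by linarith
    set s : Set ℝ := Icc (a + δ) (a + ε) with hsdef
    have hsub : s ⊆ Ioo a (a + h) := fun t ht =>
      ⟨by have := ht.1; linarith, by have := ht.2; linarith⟩
    have hs : UniqueDiffOn ℝ s := uniqueDiffOn_Icc hx
    have hdiff' : ∀ j, k + j ≤ n → ∀ t ∈ s,
        DifferentiableAt ℝ (iteratedDeriv j (iteratedDeriv k g)) t := by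
      intro j hj t ht
      rw [hcomp j]
      exact hdiff _ hj t (hsub ht)
    have hEq : ∀ i ≤ p, ∀ x ∈ s,
        iteratedDerivWithin i (iteratedDeriv k g) s x = iteratedDeriv (k + i) g x := by
      intro i hi x hx'
      rw [← hcomp i]
      exact iteratedDerivWithin_eq_iteratedDeriv_aux hs i
        (fun j hj t ht => hdiff' j (by omega) t ht) x hx'
    have hEq' : ∀ x ∈ s,
        iteratedDerivWithin (p + 1) (iteratedDeriv k g) s x = iteratedDeriv (n + 1) g x := by
      intro x hx'
      rw [show n + 1 = k + (p + 1) by omega, ← hcomp (p + 1)]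
      exact iteratedDerivWithin_eq_iteratedDeriv_aux hs (p + 1)
        (fun j hj t ht => hdiff' j (by omega) t ht) x hx'
    have hfC : ContDiffOn ℝ (p : ℕ∞) (iteratedDeriv k g) s := by
      apply contDiffOn_of_differentiableOn_deriv
      intro i hi
      have hi' : i ≤ p := by exact_mod_cast hi
      intro x hx'
      exact ((hdiff (k + i) (by omega) x (hsub hx')).differentiableWithinAt).congr
        (fun y hy => hEq i hi' y hy) (hEq i hi' x hx')
    have hf' : DifferentiableOn ℝ (iteratedDerivWithin p (iteratedDeriv k g) s)
        (Ioo (a + δ) (a + ε)) := by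
      intro x hx'
      have hxs : x ∈ s := Ioo_subset_Icc_self hx'
      have hd : DifferentiableAt ℝ (iteratedDeriv (k + p) g) x := by
        rw [hkp]; exact hdiff n le_rfl x (hsub hxs)
      exact (hd.differentiableWithinAt).congr
        (fun y hy => hEq p le_rfl y (Ioo_subset_Icc_self hy)) (hEq p le_rfl x hxs)
    obtain ⟨c, hc, hT⟩ :=
      taylor_mean_remainder_lagrange (f := iteratedDeriv k g) (n := p) hx.ne
        (by rw [uIcc_of_le hx.le]; exact hfC)
        (by rw [uIcc_of_le hx.le, uIoo_of_le hx.le]; exact hf')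
    rw [uIcc_of_le hx.le] at hT
    rw [uIoo_of_le hx.le] at hc
    refine ⟨c, hsub (Ioo_subset_Icc_self hc), ?_⟩
    have hme : a + ε - (a + δ) = ε - δ := by ring
    rw [taylor_within_apply] at hT
    have hleft : (a + δ) ∈ s := ⟨le_refl _, le_of_lt hx⟩
    rw [hEq' c (Ioo_subset_Icc_self hc)] at hT
    have hsum : ∀ i ∈ Finset.range (p + 1),
        ((i.factorial : ℝ)⁻¹ * (a + ε - (a + δ)) ^ i) •
          iteratedDerivWithin i (iteratedDeriv k g) s (a + δ) =
        ((i.factorial : ℝ)⁻¹ * (ε - δ) ^ i) * iteratedDeriv (k + i) g (a + δ) := by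
      intro i hi
      rw [smul_eq_mul, hEq i (by simpa [Nat.lt_succ_iff] using hi) _ hleft, hme]
    rw [Finset.sum_congr rfl hsum, hme] at hT
    have hT' : iteratedDeriv k g (a + ε) =
        (∑ i ∈ Finset.range (p + 1),
          ((i.factorial : ℝ)⁻¹ * (ε - δ) ^ i) * iteratedDeriv (k + i) g (a + δ)) +
        iteratedDeriv (n + 1) g c * (ε - δ) ^ (p + 1) / ((p + 1).factorial : ℝ) := by
      linarith [hT]
    have hknz : (Nat.factorial k : ℝ) ≠ 0 := by positivity
    rw [hX, hT']
    simp only [hF]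
    rw [show Finset.Icc k n = Finset.Ico k (n + 1) by rw [Finset.Ico_add_one_right_eq_Icc],
      Finset.sum_Ico_eq_sum_range, show n + 1 - k = p + 1 by omega]
    rw [add_div, Finset.sum_div]
    congr 1
    · apply Finset.sum_congr rfl
      intro i _
      have hfacN : (k + i).choose k * k.factorial * i.factorial = (k + i).factorial := by
        have := Nat.choose_mul_factorial_mul_factorial (Nat.le_add_right k i)
        simpa [Nat.add_sub_cancel_left] using this
      have hfac : ((k + i).choose k : ℝ) * k.factorial * i.factorial =
          ((k + i).factorial : ℝ) := by exact_mod_cast hfacN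
      have hinz : (i.factorial : ℝ) ≠ 0 := by positivity
      have hkinz : ((k + i).factorial : ℝ) ≠ 0 := by positivity
      rw [show k + i - k = i by omega]
      field_simp
      linear_combination (-(iteratedDeriv (k + i) g (a + δ))) * hfac
    · have hfacN : (n + 1).choose k * k.factorial * (p + 1).factorial =
          (n + 1).factorial := by
        rw [← Nat.choose_mul_factorial_mul_factorial (show k ≤ n + 1 by omega), hexp]
      have hfac : ((n + 1).choose k : ℝ) * k.factorial * (p + 1).factorial =
          ((n + 1).factorial : ℝ) := by exact_mod_cast hfacN
      have h1 : ((p + 1).factorial : ℝ) ≠ 0 := by positivity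
      have h2 : ((n + 1).factorial : ℝ) ≠ 0 := by positivity
      rw [hC]
      field_simp
      linear_combination (-(iteratedDeriv (n + 1) g c)) * hfac
  -- inequalities for each δ
  have hineq : ∀ δ ∈ Ioo (0:ℝ) ε,
      F δ + C * (ε - δ) ^ (p + 1) * m ≤ X ∧ X ≤ F δ + C * (ε - δ) ^ (p + 1) * M := by
    intro δ hδ
    obtain ⟨c, hc, hXeq⟩ := key δ hδ
    obtain ⟨hm', hM'⟩ := hbound c hc
    have hpos : 0 ≤ C * (ε - δ) ^ (p + 1) := by
      have : (0:ℝ) < ε - δ := by have := hδ.2; linarith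
      positivity
    constructor
    · rw [hXeq]
      have := mul_le_mul_of_nonneg_left hm' hpos
      linarith
    · rw [hXeq]
      have := mul_le_mul_of_nonneg_left hM' hpos
      linarith
  -- limits as δ → 0⁺
  have hδlim : Tendsto (fun δ : ℝ => ε - δ) (𝓝[>] (0:ℝ)) (𝓝 ε) := by
    have : Tendsto (fun δ : ℝ => ε - δ) (𝓝 (0:ℝ)) (𝓝 (ε - 0)) :=
      (tendsto_const_nhds.sub tendsto_id)
    simpa using this.mono_left nhdsWithin_le_nhds
  have hFlim : Tendsto F (𝓝[>] (0:ℝ)) (𝓝 L) := by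
    rw [hF, hL]
    apply tendsto_finset_sum
    intro l hl
    have hl' : l ≤ n + 1 := by have := (Finset.mem_Icc.mp hl).2; omega
    exact (tendsto_const_nhds.mul (hδlim.pow (l - k))).mul ((hlim l hl').div_const _)
  have hIoo : Ioo (0:ℝ) ε ∈ 𝓝[>] (0:ℝ) := Ioo_mem_nhdsGT_of_mem ⟨le_refl _, hε0⟩
  have hlow : L + C * ε ^ (p + 1) * m ≤ X := by
    refine le_of_tendsto_of_tendsto
      (hFlim.add ((tendsto_const_nhds.mul (hδlim.pow (p + 1))).mul tendsto_const_nhds))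
      (tendsto_const_nhds : Tendsto (fun _ : ℝ => X) _ _) ?_
    filter_upwards [hIoo] with δ hδ
    exact (hineq δ hδ).1
  have hhigh : X ≤ L + C * ε ^ (p + 1) * M := by
    refine le_of_tendsto_of_tendsto
      (tendsto_const_nhds : Tendsto (fun _ : ℝ => X) _ _)
      (hFlim.add ((tendsto_const_nhds.mul (hδlim.pow (p + 1))).mul tendsto_const_nhds)) ?_
    filter_upwards [hIoo] with δ hδ
    exact (hineq δ hδ).2
  -- conclude
  have hP : 0 < C * ε ^ (p + 1) := by positivity
  refine ⟨(X - L) / (C * ε ^ (p + 1)), ⟨?_, ?_⟩, ?_⟩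
  · rw [le_div_iff₀ hP]; linarith
  · rw [div_le_iff₀ hP]; linarith
  · rw [hexp]
    field_simp
    ring
end

section
/- Let n be a natural number, a a real number, h > 0, and g : ℝ → ℝ a function that is (n+1)-times differentiable on the open interval (a, a+h), such that for every k ∈ {0,…,n+1} the right limit d_k := lim_{ξ→0⁺} g^{(k)}(a+ξ) exists, and such that g^{(n+1)} is continuous and bounded on (a, a+h). Then for every ε with 0 < ε < h there exists ξ ∈ (0, ε) such that g(a+ε) = Σ_{k=0}^{n} (d_k/k!) · ε^k + (g^{(n+1)}(a+ξ)/(n+1)!) · ε^{n+1}. -/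
open Set Filter Topology

/-- If `g : ℝ → ℝ` is `(n+1)`-times differentiable on `(a, a+h)`, the right limits
`d k` of the `k`-th derivatives at `a` exist for `k ≤ n+1`, and `g⁽ⁿ⁺¹⁾` is continuous and
bounded on `(a, a+h)`, then for every `0 < ε < h` there is `ξ ∈ (0, ε)` with
`g(a+ε) = Σ_{k=0}^{n} (d_k/k!) ε^k + (g⁽ⁿ⁺¹⁾(a+ξ)/(n+1)!) ε^{n+1}`. -/
theorem piecewise_taylor_lagrange
    (n : ℕ) (a h : ℝ) (hh : 0 < h) (g : ℝ → ℝ) (d : ℕ → ℝ)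
    (hdiff : ∀ k ≤ n, ∀ t ∈ Ioo a (a + h), DifferentiableAt ℝ (iteratedDeriv k g) t)
    (hlim : ∀ k ≤ n + 1,
      Tendsto (fun ξ => iteratedDeriv k g (a + ξ)) (𝓝[>] (0 : ℝ)) (𝓝 (d k)))
    (hcont : ContinuousOn (iteratedDeriv (n + 1) g) (Ioo a (a + h)))
    (hbdd : ∃ C : ℝ, ∀ t ∈ Ioo a (a + h), |iteratedDeriv (n + 1) g t| ≤ C) :
    ∀ ε : ℝ, 0 < ε → ε < h →
      ∃ ξ ∈ Ioo (0 : ℝ) ε,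
        g (a + ε) =
          (∑ k ∈ Finset.range (n + 1), d k / (Nat.factorial k : ℝ) * ε ^ k) +
            iteratedDeriv (n + 1) g (a + ξ) / (Nat.factorial (n + 1) : ℝ) * ε ^ (n + 1) := by
  intro ε hε hεh
  set b := a + ε with hb
  have hab : a < b := by simp [hb]; linarith
  have hsub : Ioc a b ⊆ Ioo a (a + h) := fun t ht => ⟨ht.1, lt_of_le_of_lt ht.2 (by simp [hb]; linarith)⟩
  set s := Icc a b with hsdef
  have hunique : UniqueDiffOn ℝ s := uniqueDiffOn_Icc hab
  set G : ℝ → ℝ := fun t => if a < t then g t else d 0 with hGdef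
  have hGg : ∀ t, a < t → G t = g t := fun t ht => if_pos ht
  have hGa : G a = d 0 := if_neg (lt_irrefl a)
  -- transfer the limit hypotheses to limits at `a` from the right
  have hsubst : Tendsto (fun t : ℝ => t - a) (𝓝[>] a) (𝓝[>] (0 : ℝ)) := by
    rw [tendsto_nhdsWithin_iff]
    constructor
    · have : Tendsto (fun t : ℝ => t - a) (𝓝 a) (𝓝 (a - a)) :=
        (continuous_id.sub continuous_const).tendsto a
      simpa using this.mono_left nhdsWithin_le_nhds
    · filter_upwards [self_mem_nhdsWithin] with t ht
      exact sub_pos.2 (show a < t from ht)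
  have hlim' : ∀ k ≤ n + 1, Tendsto (iteratedDeriv k g) (𝓝[>] a) (𝓝 (d k)) := by
    intro k hk
    have := (hlim k hk).comp hsubst
    refine this.congr fun t => ?_
    simp [Function.comp]
  -- Claim 1: the within iterated derivatives of `G` agree with those of `g` on `Ioc a b`.
  have key : ∀ k, k ≤ n + 1 → ∀ t ∈ Ioc a b, iteratedDerivWithin k G s t = iteratedDeriv k g t := by
    intro k
    induction k with
    | zero => intro _ t ht; simp [iteratedDerivWithin_zero, hGg t ht.1]
    | succ k ih =>
      intro hk t ht
      have hk' : k ≤ n := Nat.succ_le_succ_iff.mp hk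
      have hts : t ∈ s := Ioc_subset_Icc_self ht
      have heq : iteratedDerivWithin k G s =ᶠ[𝓝[s] t] iteratedDeriv k g := by
        have h1 : Ioi a ∈ 𝓝[s] t := nhdsWithin_le_nhds (isOpen_Ioi.mem_nhds ht.1)
        filter_upwards [h1, self_mem_nhdsWithin] with u hu hus
        exact ih (le_of_lt (Nat.lt_of_lt_of_le (Nat.lt_succ_self k) hk)) u ⟨hu, hus.2⟩
      rw [iteratedDerivWithin_succ, iteratedDeriv_succ,
        heq.derivWithin_eq (ih (le_of_lt (Nat.lt_of_lt_of_le (Nat.lt_succ_self k) hk)) t ht),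
        (hdiff k hk' t (hsub ht)).derivWithin (hunique t hts)]
  -- Step lemma: one-sided differentiability at `a`.
  have hstep : ∀ k, k ≤ n → ∀ F : ℝ → ℝ, (∀ t ∈ Ioc a b, F t = iteratedDeriv k g t) →
      F a = d k → HasDerivWithinAt F (d (k + 1)) s a := by
    intro k hk F hFg hFa
    have hIoo : ∀ t ∈ Ioo a b, t ∈ Ioc a b := fun t ht => ⟨ht.1, le_of_lt ht.2⟩
    have hdOn : DifferentiableOn ℝ (iteratedDeriv k g) (Ioo a b) := fun t ht =>
      (hdiff k hk t (hsub (hIoo t ht))).differentiableWithinAt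
    have h1 : HasDerivWithinAt F (d (k + 1)) (Ici a) a := by
      apply hasDerivWithinAt_Ici_of_tendsto_deriv (s := Ioo a b)
      · exact hdOn.congr fun t ht => hFg t (hIoo t ht)
      · rw [ContinuousWithinAt, hFa]
        refine Tendsto.congr' ?_
          ((hlim' k (le_of_lt (Nat.lt_succ_of_le hk))).mono_left
            (nhdsWithin_mono a Ioo_subset_Ioi_self))
        filter_upwards [self_mem_nhdsWithin] with t ht
        exact (hFg t (hIoo t ht)).symm
      · exact Ioo_mem_nhdsGT_of_mem (left_mem_Ico.2 hab)
      · refine Tendsto.congr' ?_ (hlim' (k + 1) (Nat.succ_le_succ hk))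
        filter_upwards [Ioo_mem_nhdsGT_of_mem (left_mem_Ico.2 hab)] with t ht
        have heq : iteratedDeriv k g =ᶠ[𝓝 t] F := by
          filter_upwards [isOpen_Ioo.mem_nhds ht] with u hu
          exact (hFg u (hIoo u hu)).symm
        rw [iteratedDeriv_succ]
        exact heq.deriv_eq
    exact h1.mono Icc_subset_Ici_self
  -- Main claim at `a`, by induction.
  have main : ∀ k, k ≤ n → iteratedDerivWithin k G s a = d k ∧
      HasDerivWithinAt (iteratedDerivWithin k G s) (d (k + 1)) s a := by
    intro k
    induction k with
    | zero =>
      intro _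
      constructor
      · simp [iteratedDerivWithin_zero, hGa]
      · rw [iteratedDerivWithin_zero]
        exact hstep 0 (Nat.zero_le n) G (fun t ht => hGg t ht.1) hGa
    | succ k ih =>
      intro hk
      have hk' : k ≤ n := le_of_lt (Nat.lt_of_lt_of_le (Nat.lt_succ_self k) hk)
      have has : a ∈ s := left_mem_Icc.2 (le_of_lt hab)
      have hval : iteratedDerivWithin (k + 1) G s a = d (k + 1) := by
        rw [iteratedDerivWithin_succ]
        exact ((ih hk').2).derivWithin (hunique a has)
      exact ⟨hval, hstep (k + 1) hk (iteratedDerivWithin (k + 1) G s)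
        (key (k + 1) (le_of_lt (Nat.lt_succ_of_le hk))) hval⟩
  have hvala : ∀ k, k ≤ n → iteratedDerivWithin k G s a = d k := fun k hk => (main k hk).1
  -- differentiability of the within iterated derivatives on `s`
  have hdiffOn : ∀ m : ℕ, m ≤ n → DifferentiableOn ℝ (iteratedDerivWithin m G s) s := by
    intro m hm t ht
    rcases eq_or_lt_of_le ht.1 with rfl | hat
    · exact (main m hm).2.differentiableWithinAt
    · have heq : iteratedDerivWithin m G s =ᶠ[𝓝[s] t] iteratedDeriv m g := by
        filter_upwards [nhdsWithin_le_nhds (isOpen_Ioi.mem_nhds hat), self_mem_nhdsWithin]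
          with u hu hus
        exact key m (le_of_lt (Nat.lt_succ_of_le hm)) u ⟨hu, hus.2⟩
      have hteq : iteratedDerivWithin m G s t = iteratedDeriv m g t :=
        key m (le_of_lt (Nat.lt_succ_of_le hm)) t ⟨hat, ht.2⟩
      exact (Filter.EventuallyEq.differentiableWithinAt_iff heq hteq).2
        (hdiff m hm t (hsub ⟨hat, ht.2⟩)).differentiableWithinAt
  have hcd : ContDiffOn ℝ n G s := contDiffOn_of_differentiableOn_deriv (by
    intro m hm
    exact hdiffOn m (by exact_mod_cast hm))
  have hf' : DifferentiableOn ℝ (iteratedDerivWithin n G s) (Ioo a b) := by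
    intro t ht
    have heq : iteratedDeriv n g =ᶠ[𝓝 t] iteratedDerivWithin n G s := by
      filter_upwards [isOpen_Ioo.mem_nhds ht] with u hu
      exact (key n (Nat.le_succ n) u ⟨hu.1, le_of_lt hu.2⟩).symm
    exact ((heq.differentiableAt_iff).1
      (hdiff n le_rfl t (hsub ⟨ht.1, le_of_lt ht.2⟩))).differentiableWithinAt
  have hu : uIcc a b = s := uIcc_of_le hab.le
  have hu' : uIoo a b = Ioo a b := uIoo_of_le hab.le
  obtain ⟨x', hx', hx'eq⟩ := taylor_mean_remainder_lagrange hab.ne (hu ▸ hcd)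
    (by rw [hu, hu']; exact hf')
  rw [hu'] at hx'
  rw [hu] at hx'eq
  refine ⟨x' - a, ⟨by linarith [hx'.1], by simp [hb] at hx' ⊢; linarith [hx'.2]⟩, ?_⟩
  have hax' : a + (x' - a) = x' := by ring
  rw [hax']
  have hT : taylorWithinEval G n s a b =
      ∑ k ∈ Finset.range (n + 1), d k / (Nat.factorial k : ℝ) * ε ^ k := by
    rw [taylor_within_apply]
    refine Finset.sum_congr rfl fun k hk => ?_
    rw [hvala k (Nat.lt_succ_iff.mp (Finset.mem_range.mp hk))]
    have : b - a = ε := by simp [hb]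
    rw [this]
    simp [smul_eq_mul]
    ring
  have hGb : G b = g (a + ε) := hGg b hab
  have hD : iteratedDerivWithin (n + 1) G s x' = iteratedDeriv (n + 1) g x' :=
    key (n + 1) le_rfl x' ⟨hx'.1, le_of_lt hx'.2⟩
  rw [hGb, hT, hD] at hx'eq
  have hba : b - a = ε := by simp [hb]
  rw [hba] at hx'eq
  have : iteratedDeriv (n + 1) g x' * ε ^ (n + 1) / (Nat.factorial (n + 1) : ℝ) =
      iteratedDeriv (n + 1) g x' / (Nat.factorial (n + 1) : ℝ) * ε ^ (n + 1) := by ring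
  rw [this] at hx'eq
  linarith
end

section
/- Let [ḡ] be a bounded subset of ℝ^m with m = p·(n+2)+1. If [ḡ] is a convex subset of ℝ^m, then Supp([ḡ]) is a convex subset of the real vector space of functions from [-1,0] to ℝ; that is, for all g₁, g₂ ∈ Supp([ḡ]) and all t ∈ [0,1], the function t·g₁ + (1-t)·g₂ belongs to Supp([ḡ]). -/
open Set Filter Topology

noncomputable section

/-- Finite-dimensional coefficient space isomorphic to `ℝ^m`, `m = p·(n+2)+1`:
the value at `0`, the Taylor coefficients `g^{[k]}((-i·h)⁺)` for `1 ≤ i ≤ p`, `0 ≤ k ≤ n`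
(indexed here by `i : Fin p` standing for the grid point `-(i+1)·h`), and the `p` remainders. -/
abbrev PNRep (p n : ℕ) : Type := ℝ × (Fin p → Fin (n + 1) → ℝ) × (Fin p → ℝ)

/-- The left endpoint `-(i+1)·h` (with `h = 1/p`) of the `i`-th grid subinterval. -/
def gridPt (p : ℕ) (i : Fin p) : ℝ := -((i : ℝ) + 1) * (1 / p)

/-- The class `C^n_p`: on each grid subinterval `(-(i+1)h, -(i+1)h + h)`, `g` is `(n+1)`-times
differentiable, all right limits `g⁽ᵏ⁾((-(i+1)h)⁺)`, `k ≤ n+1`, exist, and `g⁽ⁿ⁺¹⁾` is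
continuous and bounded there. -/
def IsCnp (p n : ℕ) (g : ℝ → ℝ) : Prop :=
  ∀ i : Fin p,
    (∀ k ≤ n, ∀ t ∈ Ioo (gridPt p i) (gridPt p i + 1 / p),
        DifferentiableAt ℝ (iteratedDeriv k g) t) ∧
    (∀ k ≤ n + 1, ∃ dk : ℝ,
        Tendsto (fun ξ => iteratedDeriv k g (gridPt p i + ξ)) (𝓝[>] (0 : ℝ)) (𝓝 dk)) ∧
    ContinuousOn (iteratedDeriv (n + 1) g) (Ioo (gridPt p i) (gridPt p i + 1 / p)) ∧
    ∃ C : ℝ, ∀ t ∈ Ioo (gridPt p i) (gridPt p i + 1 / p), |iteratedDeriv (n + 1) g t| ≤ C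

/-- The right limit `g⁽ᵏ⁾(a⁺)` divided by `k!`, i.e. the Taylor coefficient
`g^{[k]}(a⁺)` (defined via `limUnder`; meaningful when the limit exists). -/
def rightCoeff (g : ℝ → ℝ) (k : ℕ) (a : ℝ) : ℝ :=
  limUnder (𝓝[>] (0 : ℝ)) (fun ξ => iteratedDeriv k g (a + ξ)) / (Nat.factorial k : ℝ)

/-- The range of the `(n+1)`-st Taylor coefficient `g^{[n+1]}` on the open `i`-th subinterval. -/
def remainderRange (p n : ℕ) (g : ℝ → ℝ) (i : Fin p) : Set ℝ :=
  (fun ξ => iteratedDeriv (n + 1) g (gridPt p i + ξ) / (Nat.factorial (n + 1) : ℝ)) ''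
    Ioo (0 : ℝ) (1 / p)

/-- The minimal `(p,n)`-representation `{a} × B` of `g`: the coefficient vector is uniquely
determined, and the remainder components range over
`[inf g^{[n+1]}, sup g^{[n+1]}]` on each subinterval. -/
def minRep (p n : ℕ) (g : ℝ → ℝ) : Set (PNRep p n) :=
  {x : PNRep p n |
    x.1 = g 0 ∧
    (∀ i : Fin p, ∀ k : Fin (n + 1), x.2.1 i k = rightCoeff g k (gridPt p i)) ∧
    (∀ i : Fin p,
      x.2.2 i ∈ Icc (sInf (remainderRange p n g i)) (sSup (remainderRange p n g i)))}

/-- The support of a set `[ḡ] ⊆ ℝ^m`: all `g ∈ C^n_p` whose minimal `(p,n)`-representation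
is contained in `[ḡ]`. -/
def Supp (p n : ℕ) (G : Set (PNRep p n)) : Set (ℝ → ℝ) :=
  {g : ℝ → ℝ | IsCnp p n g ∧ minRep p n g ⊆ G}


/-- linearity of iterated derivatives of a convex combination on an open interval -/
lemma itd_combo {g₁ g₂ : ℝ → ℝ} {a b : ℝ} {n : ℕ} (t : ℝ)
    (h1 : ∀ k ≤ n, ∀ x ∈ Ioo a b, DifferentiableAt ℝ (iteratedDeriv k g₁) x)
    (h2 : ∀ k ≤ n, ∀ x ∈ Ioo a b, DifferentiableAt ℝ (iteratedDeriv k g₂) x) :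
    ∀ k ≤ n + 1, ∀ x ∈ Ioo a b,
      iteratedDeriv k (fun s => t * g₁ s + (1 - t) * g₂ s) x
        = t * iteratedDeriv k g₁ x + (1 - t) * iteratedDeriv k g₂ x := by
  intro k
  induction k with
  | zero => intro _ x _; simp
  | succ k ih =>
    intro hk x hx
    have hk' : k ≤ n := Nat.succ_le_succ_iff.mp hk
    rw [iteratedDeriv_succ, iteratedDeriv_succ, iteratedDeriv_succ]
    have heq : iteratedDeriv k (fun s => t * g₁ s + (1 - t) * g₂ s)
        =ᶠ[𝓝 x] fun y => t * iteratedDeriv k g₁ y + (1 - t) * iteratedDeriv k g₂ y := by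
      filter_upwards [isOpen_Ioo.mem_nhds hx] with y hy
      exact ih (hk'.trans (Nat.le_succ n)) y hy
    rw [heq.deriv_eq,
      deriv_fun_add ((h1 k hk' x hx).const_mul t) ((h2 k hk' x hx).const_mul (1 - t)),
      deriv_const_mul t (h1 k hk' x hx), deriv_const_mul (1 - t) (h2 k hk' x hx)]

lemma combo_Icc {a b c d t x : ℝ} (hab : a ≤ b) (hcd : c ≤ d)
    (hx : x ∈ Icc (t * a + (1 - t) * c) (t * b + (1 - t) * d)) :
    ∃ y ∈ Icc a b, ∃ z ∈ Icc c d, x = t * y + (1 - t) * z := by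
  set S : Set ℝ := (fun q : ℝ × ℝ => t * q.1 + (1 - t) * q.2) '' (Icc a b ×ˢ Icc c d)
  have hlin : IsLinearMap ℝ (fun q : ℝ × ℝ => t * q.1 + (1 - t) * q.2) := by
    constructor
    · intro u v; simp [Prod.fst_add, Prod.snd_add]; ring
    · intro c' u; simp [smul_eq_mul]; ring
  have hconvS : Convex ℝ S := ((convex_Icc a b).prod (convex_Icc c d)).is_linear_image hlin
  have hlo : t * a + (1 - t) * c ∈ S :=
    ⟨(a, c), ⟨⟨le_rfl, hab⟩, ⟨le_rfl, hcd⟩⟩, rfl⟩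
  have hhi : t * b + (1 - t) * d ∈ S :=
    ⟨(b, d), ⟨⟨hab, le_rfl⟩, ⟨hcd, le_rfl⟩⟩, rfl⟩
  have := hconvS.ordConnected.out hlo hhi hx
  obtain ⟨⟨y, z⟩, ⟨hy, hz⟩, h⟩ := this
  exact ⟨y, hy, z, hz, h.symm⟩

/-- If a bounded `(p,n)`-representation `[ḡ] ⊆ ℝ^m`, `m = p(n+2)+1`, is convex,
then `Supp([ḡ])` is a convex subset of the real vector space of functions: for all
`g₁, g₂ ∈ Supp([ḡ])` and `t ∈ [0,1]`, the function `t·g₁ + (1-t)·g₂` is in `Supp([ḡ])`. -/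
theorem supp_convex (p n : ℕ) (hp : 0 < p)
    (G : Set (PNRep p n))
    (hG : Bornology.IsBounded G) (hconv : Convex ℝ G) :
    ∀ g₁ ∈ Supp p n G, ∀ g₂ ∈ Supp p n G, ∀ t : ℝ, t ∈ Icc (0 : ℝ) 1 →
      (fun s => t * g₁ s + (1 - t) * g₂ s) ∈ Supp p n G := by
  intro g₁ hg₁ g₂ hg₂ t ht
  obtain ⟨hC1, hS1⟩ := hg₁
  obtain ⟨hC2, hS2⟩ := hg₂
  have ht' : (0:ℝ) ≤ 1 - t := by linarith [ht.2]
  have hpos : (0 : ℝ) < 1 / p := by positivity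
  have hfac : (0 : ℝ) < (Nat.factorial (n + 1) : ℝ) := by positivity
  set g : ℝ → ℝ := fun s => t * g₁ s + (1 - t) * g₂ s with hg
  have key : ∀ i : Fin p, ∀ k ≤ n + 1, ∀ x ∈ Ioo (gridPt p i) (gridPt p i + 1 / p),
      iteratedDeriv k g x = t * iteratedDeriv k g₁ x + (1 - t) * iteratedDeriv k g₂ x :=
    fun i => itd_combo t (hC1 i).1 (hC2 i).1
  have hIooMem : Ioo (0 : ℝ) (1 / p) ∈ 𝓝[>] (0 : ℝ) :=
    Ioo_mem_nhdsGT_of_mem ⟨le_rfl, hpos⟩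
  have hmemIoo : ∀ i : Fin p, ∀ ξ ∈ Ioo (0 : ℝ) (1 / p),
      gridPt p i + ξ ∈ Ioo (gridPt p i) (gridPt p i + 1 / p) := by
    intro i ξ hξ
    exact ⟨by linarith [hξ.1], by linarith [hξ.2]⟩
  have hlim : ∀ i : Fin p, ∀ k ≤ n + 1, ∀ d₁ d₂ : ℝ,
      Tendsto (fun ξ => iteratedDeriv k g₁ (gridPt p i + ξ)) (𝓝[>] (0 : ℝ)) (𝓝 d₁) →
      Tendsto (fun ξ => iteratedDeriv k g₂ (gridPt p i + ξ)) (𝓝[>] (0 : ℝ)) (𝓝 d₂) →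
      Tendsto (fun ξ => iteratedDeriv k g (gridPt p i + ξ)) (𝓝[>] (0 : ℝ))
        (𝓝 (t * d₁ + (1 - t) * d₂)) := by
    intro i k hk d₁ d₂ h₁ h₂
    have hev : (fun ξ => t * iteratedDeriv k g₁ (gridPt p i + ξ)
        + (1 - t) * iteratedDeriv k g₂ (gridPt p i + ξ))
        =ᶠ[𝓝[>] (0 : ℝ)] fun ξ => iteratedDeriv k g (gridPt p i + ξ) := by
      filter_upwards [hIooMem] with ξ hξ
      exact (key i k hk _ (hmemIoo i ξ hξ)).symm
    exact Filter.Tendsto.congr' hev ((h₁.const_mul t).add (h₂.const_mul (1 - t)))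
  have hCnp : IsCnp p n g := by
    intro i
    obtain ⟨hd1, hl1, hc1, C₁, hb1⟩ := hC1 i
    obtain ⟨hd2, hl2, hc2, C₂, hb2⟩ := hC2 i
    refine ⟨?_, ?_, ?_, ?_⟩
    · intro k hk x hx
      have hdiff : DifferentiableAt ℝ
          (fun y => t * iteratedDeriv k g₁ y + (1 - t) * iteratedDeriv k g₂ y) x :=
        ((hd1 k hk x hx).const_mul t).add ((hd2 k hk x hx).const_mul (1 - t))
      refine hdiff.congr_of_eventuallyEq ?_
      filter_upwards [isOpen_Ioo.mem_nhds hx] with y hy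
      exact key i k (hk.trans (Nat.le_succ n)) y hy
    · intro k hk
      obtain ⟨d₁, h₁⟩ := hl1 k hk
      obtain ⟨d₂, h₂⟩ := hl2 k hk
      exact ⟨t * d₁ + (1 - t) * d₂, hlim i k hk d₁ d₂ h₁ h₂⟩
    · have hcont : ContinuousOn
          (fun x => t * iteratedDeriv (n + 1) g₁ x + (1 - t) * iteratedDeriv (n + 1) g₂ x)
          (Ioo (gridPt p i) (gridPt p i + 1 / p)) :=
        (continuousOn_const.mul hc1).add (continuousOn_const.mul hc2)
      exact hcont.congr fun x hx => key i (n + 1) le_rfl x hx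
    · refine ⟨|t| * C₁ + |1 - t| * C₂, fun x hx => ?_⟩
      rw [key i (n + 1) le_rfl x hx]
      calc |t * iteratedDeriv (n + 1) g₁ x + (1 - t) * iteratedDeriv (n + 1) g₂ x|
          ≤ |t| * |iteratedDeriv (n + 1) g₁ x| + |1 - t| * |iteratedDeriv (n + 1) g₂ x| := by
            rw [← abs_mul, ← abs_mul]; exact abs_add_le _ _
        _ ≤ |t| * C₁ + |1 - t| * C₂ := by
            gcongr
            · exact hb1 x hx
            · exact hb2 x hx
  -- right Taylor coefficients combine linearly
  have hrc : ∀ i : Fin p, ∀ k : Fin (n + 1),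
      rightCoeff g k (gridPt p i)
        = t * rightCoeff g₁ k (gridPt p i) + (1 - t) * rightCoeff g₂ k (gridPt p i) := by
    intro i k
    have hk : (k : ℕ) ≤ n + 1 := k.is_le.trans (Nat.le_succ n)
    obtain ⟨d₁, h₁⟩ := (hC1 i).2.1 k hk
    obtain ⟨d₂, h₂⟩ := (hC2 i).2.1 k hk
    have h := hlim i k hk d₁ d₂ h₁ h₂
    unfold rightCoeff
    rw [h.limUnder_eq, h₁.limUnder_eq, h₂.limUnder_eq]
    ring
  -- boundedness of remainder ranges
  have hne : ∀ f : ℝ → ℝ, ∀ i : Fin p, (remainderRange p n f i).Nonempty :=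
    fun f i => (nonempty_Ioo.mpr hpos).image _
  have hbdd : ∀ f : ℝ → ℝ, ∀ i : Fin p,
      (∃ C : ℝ, ∀ x ∈ Ioo (gridPt p i) (gridPt p i + 1 / p),
        |iteratedDeriv (n + 1) f x| ≤ C) →
      BddBelow (remainderRange p n f i) ∧ BddAbove (remainderRange p n f i) := by
    rintro f i ⟨C, hC⟩
    constructor
    · refine ⟨-(C / (Nat.factorial (n + 1) : ℝ)), ?_⟩
      rintro v ⟨ξ, hξ, rfl⟩
      have h1 := abs_le.mp (hC _ (hmemIoo i ξ hξ))
      rw [← neg_div]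
      exact (div_le_div_iff_of_pos_right hfac).mpr h1.1
    · refine ⟨C / (Nat.factorial (n + 1) : ℝ), ?_⟩
      rintro v ⟨ξ, hξ, rfl⟩
      have h1 := abs_le.mp (hC _ (hmemIoo i ξ hξ))
      exact (div_le_div_iff_of_pos_right hfac).mpr h1.2
  refine ⟨hCnp, ?_⟩
  rintro ⟨x0, xc, xr⟩ ⟨hx0, hxc, hxr⟩
  have H : ∀ i : Fin p,
      ∃ y ∈ Icc (sInf (remainderRange p n g₁ i)) (sSup (remainderRange p n g₁ i)),
      ∃ z ∈ Icc (sInf (remainderRange p n g₂ i)) (sSup (remainderRange p n g₂ i)),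
      xr i = t * y + (1 - t) * z := by
    intro i
    obtain ⟨bb1, ba1⟩ := hbdd g₁ i (hC1 i).2.2.2
    obtain ⟨bb2, ba2⟩ := hbdd g₂ i (hC2 i).2.2.2
    have h₁ : sInf (remainderRange p n g₁ i) ≤ sSup (remainderRange p n g₁ i) :=
      csInf_le_csSup (hne g₁ i) bb1 ba1
    have h₂ : sInf (remainderRange p n g₂ i) ≤ sSup (remainderRange p n g₂ i) :=
      csInf_le_csSup (hne g₂ i) bb2 ba2
    have hlo : t * sInf (remainderRange p n g₁ i) + (1 - t) * sInf (remainderRange p n g₂ i)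
        ≤ sInf (remainderRange p n g i) := by
      refine le_csInf (hne g i) ?_
      rintro v ⟨ξ, hξ, rfl⟩
      have hv1 : sInf (remainderRange p n g₁ i)
          ≤ iteratedDeriv (n + 1) g₁ (gridPt p i + ξ) / (Nat.factorial (n + 1) : ℝ) :=
        csInf_le bb1 ⟨ξ, hξ, rfl⟩
      have hv2 : sInf (remainderRange p n g₂ i)
          ≤ iteratedDeriv (n + 1) g₂ (gridPt p i + ξ) / (Nat.factorial (n + 1) : ℝ) :=
        csInf_le bb2 ⟨ξ, hξ, rfl⟩
      simp only
      rw [key i (n + 1) le_rfl _ (hmemIoo i ξ hξ), add_div, mul_div_assoc, mul_div_assoc]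
      have e1 := mul_le_mul_of_nonneg_left hv1 ht.1
      have e2 := mul_le_mul_of_nonneg_left hv2 ht'
      linarith
    have hhi : sSup (remainderRange p n g i)
        ≤ t * sSup (remainderRange p n g₁ i) + (1 - t) * sSup (remainderRange p n g₂ i) := by
      refine csSup_le (hne g i) ?_
      rintro v ⟨ξ, hξ, rfl⟩
      have hv1 : iteratedDeriv (n + 1) g₁ (gridPt p i + ξ) / (Nat.factorial (n + 1) : ℝ)
          ≤ sSup (remainderRange p n g₁ i) :=
        le_csSup ba1 ⟨ξ, hξ, rfl⟩
      have hv2 : iteratedDeriv (n + 1) g₂ (gridPt p i + ξ) / (Nat.factorial (n + 1) : ℝ)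
          ≤ sSup (remainderRange p n g₂ i) :=
        le_csSup ba2 ⟨ξ, hξ, rfl⟩
      simp only
      rw [key i (n + 1) le_rfl _ (hmemIoo i ξ hξ), add_div, mul_div_assoc, mul_div_assoc]
      have e1 := mul_le_mul_of_nonneg_left hv1 ht.1
      have e2 := mul_le_mul_of_nonneg_left hv2 ht'
      linarith
    exact combo_Icc h₁ h₂ ⟨hlo.trans (hxr i).1, (hxr i).2.trans hhi⟩
  choose y hy z hz hyz using H
  have hx1G : ((g₁ 0, fun (i : Fin p) (k : Fin (n + 1)) => rightCoeff g₁ (k : ℕ) (gridPt p i), y) : PNRep p n) ∈ G :=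
    hS1 ⟨rfl, fun i k => rfl, hy⟩
  have hx2G : ((g₂ 0, fun (i : Fin p) (k : Fin (n + 1)) => rightCoeff g₂ (k : ℕ) (gridPt p i), z) : PNRep p n) ∈ G :=
    hS2 ⟨rfl, fun i k => rfl, hz⟩
  have hmem := hconv hx1G hx2G ht.1 ht' (by ring)
  have hxeq : ((x0, xc, xr) : PNRep p n)
      = t • (g₁ 0, fun (i : Fin p) (k : Fin (n + 1)) => rightCoeff g₁ (k : ℕ) (gridPt p i), y)
        + (1 - t) • (g₂ 0, fun (i : Fin p) (k : Fin (n + 1)) => rightCoeff g₂ (k : ℕ) (gridPt p i), z) := by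
    simp only [Prod.smul_mk, Prod.mk_add_mk, Prod.mk.injEq, smul_eq_mul]
    refine ⟨hx0, ?_, ?_⟩
    · funext i k
      simp only [Pi.add_apply, Pi.smul_apply, smul_eq_mul]
      exact (hxc i k).trans (hrc i k)
    · funext i
      simp only [Pi.add_apply, Pi.smul_apply, smul_eq_mul]
      exact hyz i
  rw [hxeq]
  exact hmem

end
end

section
/- Let [ḡ] be a bounded subset of ℝ^m with m = p·(n+2)+1, and let k ≥ 0 be an integer. If [ḡ] is a convex subset of ℝ^m, then the set Supp([ḡ]) ∩ C^k, consisting of those functions in Supp([ḡ]) that are k-times continuously differentiable on [-1,0], is a convex subset of the real vector space of functions from [-1,0] to ℝ. -/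
open Set Filter Topology

noncomputable section

lemma combo_mem (a b Lg Sg Lf Sf w : ℝ) (ha : 0 ≤ a) (hb : 0 ≤ b)
    (h1 : Lg ≤ Sg) (h2 : Lf ≤ Sf)
    (hw : w ∈ Icc (a * Lg + b * Lf) (a * Sg + b * Sf)) :
    ∃ u ∈ Icc Lg Sg, ∃ v ∈ Icc Lf Sf, w = a * u + b * v := by
  set L := a * Lg + b * Lf with hL
  set U := a * Sg + b * Sf with hU
  obtain ⟨hw1, hw2⟩ := hw
  by_cases hUL : U = L
  · refine ⟨Lg, ⟨le_rfl, h1⟩, Lf, ⟨le_rfl, h2⟩, ?_⟩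
    rw [hUL] at hw2; linarith
  · have hlt : L < U := lt_of_le_of_ne (le_trans hw1 hw2) (Ne.symm hUL)
    set t := (w - L) / (U - L) with ht
    have hUL' : U - L > 0 := by linarith
    have ht0 : 0 ≤ t := div_nonneg (by linarith) (by linarith)
    have ht1 : t ≤ 1 := (div_le_one hUL').mpr (by linarith)
    have htw : t * (U - L) = w - L := div_mul_cancel₀ _ (by linarith)
    refine ⟨Lg + t * (Sg - Lg), ⟨by nlinarith, by nlinarith⟩,
      Lf + t * (Sf - Lf), ⟨by nlinarith, by nlinarith⟩, ?_⟩
    have : a * (Lg + t * (Sg - Lg)) + b * (Lf + t * (Sf - Lf)) = L + t * (U - L) := by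
      rw [hL, hU]; ring
    rw [this, htw]; ring

lemma iter_combo {s : Set ℝ} (hs : IsOpen s) (g f : ℝ → ℝ) (a b : ℝ) {n : ℕ}
    (hg : ∀ k ≤ n, ∀ t ∈ s, DifferentiableAt ℝ (iteratedDeriv k g) t)
    (hf : ∀ k ≤ n, ∀ t ∈ s, DifferentiableAt ℝ (iteratedDeriv k f) t) :
    ∀ k ≤ n + 1, ∀ t ∈ s,
      iteratedDeriv k (a • g + b • f) t = a * iteratedDeriv k g t + b * iteratedDeriv k f t := by
  intro k
  induction k with
  | zero =>
    intro _ t _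
    simp [iteratedDeriv_zero, Pi.add_apply, Pi.smul_apply, smul_eq_mul]
  | succ k ih =>
    intro hk t ht
    have hk' : k ≤ n := Nat.lt_succ_iff.mp hk
    have hev : iteratedDeriv k (a • g + b • f) =ᶠ[𝓝 t]
        fun x => a * iteratedDeriv k g x + b * iteratedDeriv k f x := by
      filter_upwards [hs.mem_nhds ht] with x hx
      exact ih (le_trans hk' (Nat.le_succ n)) x hx
    rw [iteratedDeriv_succ, hev.deriv_eq,
      deriv_fun_add ((hg k hk' t ht).const_mul a) ((hf k hk' t ht).const_mul b),
      deriv_const_mul a (hg k hk' t ht), deriv_const_mul b (hf k hk' t ht),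
      ← iteratedDeriv_succ, ← iteratedDeriv_succ]

/-- If a bounded `(p,n)`-representation `[ḡ] ⊆ ℝ^m`, `m = p(n+2)+1`, is convex,
then `Supp([ḡ]) ∩ C^k` (the functions in the support that are `k`-times continuously
differentiable on `[-1,0]`) is a convex subset of the space of functions. -/
theorem supp_inter_ck_convex (p n k : ℕ) (hp : 0 < p)
    (G : Set (PNRep p n))
    (hG : Bornology.IsBounded G) (hconv : Convex ℝ G) :
    Convex ℝ (Supp p n G ∩ {g : ℝ → ℝ | ContDiffOn ℝ k g (Icc (-1 : ℝ) 0)}) := by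
  intro g hg f hf a b ha hb hab
  obtain ⟨⟨hgC, hgSub⟩, hgk⟩ := hg
  obtain ⟨⟨hfC, hfSub⟩, hfk⟩ := hf
  have hp' : (0 : ℝ) < 1 / p := by positivity
  have key : ∀ i : Fin p, ∀ m ≤ n + 1, ∀ t ∈ Ioo (gridPt p i) (gridPt p i + 1 / p),
      iteratedDeriv m (a • g + b • f) t
        = a * iteratedDeriv m g t + b * iteratedDeriv m f t :=
    fun i => iter_combo isOpen_Ioo g f a b (hgC i).1 (hfC i).1
  -- tendsto for the combination
  have tendF : ∀ i : Fin p, ∀ m ≤ n + 1, ∀ dg df : ℝ,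
      Tendsto (fun ξ => iteratedDeriv m g (gridPt p i + ξ)) (𝓝[>] (0 : ℝ)) (𝓝 dg) →
      Tendsto (fun ξ => iteratedDeriv m f (gridPt p i + ξ)) (𝓝[>] (0 : ℝ)) (𝓝 df) →
      Tendsto (fun ξ => iteratedDeriv m (a • g + b • f) (gridPt p i + ξ)) (𝓝[>] (0 : ℝ))
        (𝓝 (a * dg + b * df)) := by
    intro i m hm dg df hdg hdf
    apply ((hdg.const_mul a).add (hdf.const_mul b)).congr'
    filter_upwards [Ioo_mem_nhdsGT_of_mem (left_mem_Ico.mpr hp')] with ξ hξ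
    exact (key i m hm _ ⟨by linarith [hξ.1], by linarith [hξ.2]⟩).symm
  have hcnp : IsCnp p n (a • g + b • f) := by
    intro i
    obtain ⟨hg1, hg2, hg3, Cg, hg4⟩ := hgC i
    obtain ⟨hf1, hf2, hf3, Cf, hf4⟩ := hfC i
    refine ⟨?_, ?_, ?_, ?_⟩
    · intro m hm t ht
      have hev : (fun x => a * iteratedDeriv m g x + b * iteratedDeriv m f x)
          =ᶠ[𝓝 t] iteratedDeriv m (a • g + b • f) := by
        filter_upwards [isOpen_Ioo.mem_nhds ht] with x hx
        exact (key i m (le_trans hm (Nat.le_succ n)) x hx).symm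
      exact (((hg1 m hm t ht).const_mul a).add
        ((hf1 m hm t ht).const_mul b)).congr_of_eventuallyEq hev.symm
    · intro m hm
      obtain ⟨dg, hdg⟩ := hg2 m hm
      obtain ⟨df, hdf⟩ := hf2 m hm
      exact ⟨a * dg + b * df, tendF i m hm dg df hdg hdf⟩
    · have hc : ContinuousOn
          (fun x : ℝ => a * iteratedDeriv (n + 1) g x + b * iteratedDeriv (n + 1) f x)
          (Ioo (gridPt p i) (gridPt p i + 1 / p)) :=
        (continuousOn_const.mul hg3).add (continuousOn_const.mul hf3)
      exact hc.congr fun t ht => key i (n + 1) le_rfl t ht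
    · refine ⟨|a| * Cg + |b| * Cf, fun t ht => ?_⟩
      rw [key i (n + 1) le_rfl t ht]
      calc |a * iteratedDeriv (n + 1) g t + b * iteratedDeriv (n + 1) f t|
          ≤ |a * iteratedDeriv (n + 1) g t| + |b * iteratedDeriv (n + 1) f t| := abs_add_le _ _
        _ ≤ |a| * Cg + |b| * Cf := by
            rw [abs_mul, abs_mul]
            gcongr
            exacts [hg4 t ht, hf4 t ht]
  refine ⟨⟨hcnp, ?_⟩, (hgk.const_smul a).add (hfk.const_smul b)⟩
  intro x hx
  obtain ⟨hx1, hx2, hx3⟩ := hx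
  have hcoeff : ∀ i : Fin p, ∀ j : Fin (n + 1),
      rightCoeff (a • g + b • f) j (gridPt p i)
        = a * rightCoeff g j (gridPt p i) + b * rightCoeff f j (gridPt p i) := by
    intro i j
    have hj : (j : ℕ) ≤ n + 1 := le_trans (Nat.le_of_lt_succ j.isLt) (Nat.le_succ n)
    obtain ⟨dg, hdg⟩ := (hgC i).2.1 j hj
    obtain ⟨df, hdf⟩ := (hfC i).2.1 j hj
    unfold rightCoeff
    rw [(tendF i j hj dg df hdg hdf).limUnder_eq, hdg.limUnder_eq, hdf.limUnder_eq]
    ring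
  have hrem : ∀ i : Fin p,
      ∃ u ∈ Icc (sInf (remainderRange p n g i)) (sSup (remainderRange p n g i)),
      ∃ v ∈ Icc (sInf (remainderRange p n f i)) (sSup (remainderRange p n f i)),
        x.2.2 i = a * u + b * v := by
    intro i
    obtain ⟨_, _, _, Cg, hg4⟩ := hgC i
    obtain ⟨_, _, _, Cf, hf4⟩ := hfC i
    have hIoo : (Ioo (0 : ℝ) (1 / p)).Nonempty := nonempty_Ioo.mpr hp'
    have hmem : ∀ ξ ∈ Ioo (0 : ℝ) (1 / p),
        gridPt p i + ξ ∈ Ioo (gridPt p i) (gridPt p i + 1 / p) := by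
      intro ξ hξ; exact ⟨by linarith [hξ.1], by linarith [hξ.2]⟩
    have hbd : ∀ (h : ℝ → ℝ) (C : ℝ),
        (∀ t ∈ Ioo (gridPt p i) (gridPt p i + 1 / p), |iteratedDeriv (n + 1) h t| ≤ C) →
        BddBelow (remainderRange p n h i) ∧ BddAbove (remainderRange p n h i) := by
      intro h C hC
      have habs : ∀ ξ ∈ Ioo (0 : ℝ) (1 / p),
          |iteratedDeriv (n + 1) h (gridPt p i + ξ) / (Nat.factorial (n + 1) : ℝ)|
            ≤ C / (Nat.factorial (n + 1) : ℝ) := by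
        intro ξ hξ
        have hfac : (0 : ℝ) < (Nat.factorial (n + 1) : ℝ) := by positivity
        rw [abs_div, abs_of_pos hfac]
        gcongr
        exact hC _ (hmem ξ hξ)
      constructor
      · refine ⟨-(C / (Nat.factorial (n + 1) : ℝ)), ?_⟩
        rintro y ⟨ξ, hξ, rfl⟩
        exact (abs_le.mp (habs ξ hξ)).1
      · refine ⟨C / (Nat.factorial (n + 1) : ℝ), ?_⟩
        rintro y ⟨ξ, hξ, rfl⟩
        exact (abs_le.mp (habs ξ hξ)).2
    obtain ⟨hgBb, hgBa⟩ := hbd g Cg hg4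
    obtain ⟨hfBb, hfBa⟩ := hbd f Cf hf4
    have hgNe : (remainderRange p n g i).Nonempty := hIoo.image _
    have hfNe : (remainderRange p n f i).Nonempty := hIoo.image _
    have hFNe : (remainderRange p n (a • g + b • f) i).Nonempty := hIoo.image _
    have hFsplit : ∀ ξ ∈ Ioo (0 : ℝ) (1 / p),
        iteratedDeriv (n + 1) (a • g + b • f) (gridPt p i + ξ) / (Nat.factorial (n + 1) : ℝ)
          = a * (iteratedDeriv (n + 1) g (gridPt p i + ξ) / (Nat.factorial (n + 1) : ℝ))
            + b * (iteratedDeriv (n + 1) f (gridPt p i + ξ) / (Nat.factorial (n + 1) : ℝ)) := by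
      intro ξ hξ
      rw [key i (n + 1) le_rfl _ (hmem ξ hξ)]
      ring
    have hlow : a * sInf (remainderRange p n g i) + b * sInf (remainderRange p n f i)
        ≤ sInf (remainderRange p n (a • g + b • f) i) := by
      refine le_csInf hFNe ?_
      rintro y ⟨ξ, hξ, rfl⟩
      dsimp only
      rw [hFsplit ξ hξ]
      have h1 := csInf_le hgBb (⟨ξ, hξ, rfl⟩ : _ ∈ remainderRange p n g i)
      have h2 := csInf_le hfBb (⟨ξ, hξ, rfl⟩ : _ ∈ remainderRange p n f i)
      exact add_le_add (mul_le_mul_of_nonneg_left h1 ha) (mul_le_mul_of_nonneg_left h2 hb)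
    have hhigh : sSup (remainderRange p n (a • g + b • f) i)
        ≤ a * sSup (remainderRange p n g i) + b * sSup (remainderRange p n f i) := by
      refine csSup_le hFNe ?_
      rintro y ⟨ξ, hξ, rfl⟩
      dsimp only
      rw [hFsplit ξ hξ]
      have h1 := le_csSup hgBa (⟨ξ, hξ, rfl⟩ : _ ∈ remainderRange p n g i)
      have h2 := le_csSup hfBa (⟨ξ, hξ, rfl⟩ : _ ∈ remainderRange p n f i)
      exact add_le_add (mul_le_mul_of_nonneg_left h1 ha) (mul_le_mul_of_nonneg_left h2 hb)
    refine combo_mem a b _ _ _ _ _ ha hb (csInf_le_csSup hgNe hgBb hgBa)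
      (csInf_le_csSup hfNe hfBb hfBa) ⟨?_, ?_⟩
    · exact le_trans hlow (hx3 i).1
    · exact le_trans (hx3 i).2 hhigh
  choose u hu v hv hxv using hrem
  have hy : ((g 0, fun i j => rightCoeff g j (gridPt p i), u) : PNRep p n) ∈ minRep p n g :=
    ⟨rfl, fun _ _ => rfl, hu⟩
  have hz : ((f 0, fun i j => rightCoeff f j (gridPt p i), v) : PNRep p n) ∈ minRep p n f :=
    ⟨rfl, fun _ _ => rfl, hv⟩
  have hxeq : x = a • ((g 0, fun i j => rightCoeff g j (gridPt p i), u) : PNRep p n)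
      + b • ((f 0, fun i j => rightCoeff f j (gridPt p i), v) : PNRep p n) := by
    obtain ⟨x1, x2, x3⟩ := x
    refine Prod.ext ?_ (Prod.ext ?_ ?_)
    · simpa [Pi.add_apply, Pi.smul_apply, smul_eq_mul] using hx1
    · funext i j
      simpa [smul_eq_mul] using (hx2 i j).trans (hcoeff i j)
    · funext i
      simpa [smul_eq_mul] using hxv i
  rw [hxeq]
  exact hconv (hgSub hy) (hfSub hz) ha hb hab


end
end
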